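/- Let τ > 0, let N be a natural number, and for k = 1,…,N let E_k⁰, E_k¹ : ℝ → ℝ be differentiable functions. Let Ψ_N = Ψ⁽¹⁾ ∘ ⋯ ∘ Ψ⁽ᴺ⁾ be the NuFI composite map of the corresponding backward Störmer–Verlet steps. Then Ψ_N is differentiable at every point of ℝ × ℝ and the determinant of its Fréchet derivative equals 1 everywhere (discrete volume preservation of the NuFI flow map). -/

import Mathlib

/-- The backward Störmer–Verlet step for the Vlasov–Poisson characteristics. -/
noncomputable def svStep (τ : ℝ) (E0 E1 : ℝ → ℝ) : ℝ × ℝ → ℝ × ℝ :=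
  fun p =>
    let vhalf := p.2 + (τ / 2) * E1 p.1
    let x1 := p.1 - τ * vhalf
    (x1, vhalf + (τ / 2) * E0 x1)

/-- The NuFI composite map `Ψ_N = Ψ⁽¹⁾ ∘ Ψ⁽²⁾ ∘ ⋯ ∘ Ψ⁽ᴺ⁾`. -/
noncomputable def nufiComp (τ : ℝ) (E0 E1 : ℕ → ℝ → ℝ) : ℕ → (ℝ × ℝ → ℝ × ℝ)
  | 0 => id
  | n + 1 => nufiComp τ E0 E1 n ∘ svStep τ (E0 (n + 1)) (E1 (n + 1))

lemma clm_det_eq (L : ℝ×ℝ →L[ℝ] ℝ×ℝ) :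
    L.det = (L (1,0)).1 * (L (0,1)).2 - (L (0,1)).1 * (L (1,0)).2 := by
  show LinearMap.det _ = _
  rw [← LinearMap.det_toMatrix (Module.Basis.finTwoProd ℝ), Matrix.det_fin_two]
  simp [LinearMap.toMatrix_apply, Module.Basis.finTwoProd]

lemma svStep_hasFDerivAt (τ : ℝ) (E0 E1 : ℝ → ℝ) (h0 : Differentiable ℝ E0)
    (h1 : Differentiable ℝ E1) (p : ℝ × ℝ) :
    HasFDerivAt (svStep τ E0 E1)
      (((ContinuousLinearMap.fst ℝ ℝ ℝ) - τ • ((ContinuousLinearMap.snd ℝ ℝ ℝ) + (τ/2) • (deriv E1 p.1 • ContinuousLinearMap.fst ℝ ℝ ℝ))).prod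
       (((ContinuousLinearMap.snd ℝ ℝ ℝ) + (τ/2) • (deriv E1 p.1 • ContinuousLinearMap.fst ℝ ℝ ℝ)) +
        (τ/2) • (deriv E0 (p.1 - τ * (p.2 + (τ/2) * E1 p.1)) •
          ((ContinuousLinearMap.fst ℝ ℝ ℝ) - τ • ((ContinuousLinearMap.snd ℝ ℝ ℝ) + (τ/2) • (deriv E1 p.1 • ContinuousLinearMap.fst ℝ ℝ ℝ)))))) p := by
  have hvh : HasFDerivAt (fun p : ℝ×ℝ => p.2 + (τ/2) * E1 p.1)
      ((ContinuousLinearMap.snd ℝ ℝ ℝ) + (τ/2) • (deriv E1 p.1 • ContinuousLinearMap.fst ℝ ℝ ℝ)) p :=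
    (hasFDerivAt_snd).add (((h1 p.1).hasDerivAt.comp_hasFDerivAt p (hasFDerivAt_fst)).const_mul (τ/2))
  have hx1 : HasFDerivAt (fun p : ℝ×ℝ => p.1 - τ * (p.2 + (τ/2) * E1 p.1))
      ((ContinuousLinearMap.fst ℝ ℝ ℝ) - τ • ((ContinuousLinearMap.snd ℝ ℝ ℝ) + (τ/2) • (deriv E1 p.1 • ContinuousLinearMap.fst ℝ ℝ ℝ))) p :=
    (hasFDerivAt_fst).sub (hvh.const_mul τ)
  exact hx1.prodMk (hvh.add (((h0 _).hasDerivAt.comp_hasFDerivAt p hx1).const_mul (τ/2)))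

lemma svStep_det (τ : ℝ) (E0 E1 : ℝ → ℝ) (h0 : Differentiable ℝ E0)
    (h1 : Differentiable ℝ E1) (p : ℝ × ℝ) :
    (fderiv ℝ (svStep τ E0 E1) p).det = 1 := by
  rw [(svStep_hasFDerivAt τ E0 E1 h0 h1 p).fderiv, clm_det_eq]
  simp only [ContinuousLinearMap.prod_apply, ContinuousLinearMap.add_apply,
    ContinuousLinearMap.sub_apply, ContinuousLinearMap.smul_apply,
    ContinuousLinearMap.coe_fst', ContinuousLinearMap.coe_snd', smul_eq_mul]
  ring

theorem nufiComp_differentiable_det_one (τ : ℝ) (hτ : 0 < τ) (N : ℕ)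
    (E0 E1 : ℕ → ℝ → ℝ)
    (hE0 : ∀ k, 1 ≤ k → k ≤ N → Differentiable ℝ (E0 k))
    (hE1 : ∀ k, 1 ≤ k → k ≤ N → Differentiable ℝ (E1 k)) :
    Differentiable ℝ (nufiComp τ E0 E1 N) ∧
    ∀ p : ℝ × ℝ, (fderiv ℝ (nufiComp τ E0 E1 N) p).det = 1 := by
  induction N with
  | zero =>
    refine ⟨differentiable_id, fun p => ?_⟩
    have : fderiv ℝ (nufiComp τ E0 E1 0) p = ContinuousLinearMap.id ℝ (ℝ×ℝ) := by
      show fderiv ℝ (id : ℝ×ℝ → ℝ×ℝ) p = _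
      exact fderiv_id
    rw [this]
    show LinearMap.det _ = 1
    simp
  | succ n ih =>
    have h0n : ∀ k, 1 ≤ k → k ≤ n → Differentiable ℝ (E0 k) := fun k h1k h2k =>
      hE0 k h1k (h2k.trans (Nat.le_succ n))
    have h1n : ∀ k, 1 ≤ k → k ≤ n → Differentiable ℝ (E1 k) := fun k h1k h2k =>
      hE1 k h1k (h2k.trans (Nat.le_succ n))
    obtain ⟨ihd, ihdet⟩ := ih h0n h1n
    have hs0 : Differentiable ℝ (E0 (n+1)) := hE0 _ (Nat.succ_le_succ (Nat.zero_le n)) le_rfl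
    have hs1 : Differentiable ℝ (E1 (n+1)) := hE1 _ (Nat.succ_le_succ (Nat.zero_le n)) le_rfl
    have hsv : Differentiable ℝ (svStep τ (E0 (n+1)) (E1 (n+1))) := fun p =>
      (svStep_hasFDerivAt τ _ _ hs0 hs1 p).differentiableAt
    refine ⟨ihd.comp hsv, fun p => ?_⟩
    show (fderiv ℝ (nufiComp τ E0 E1 n ∘ svStep τ (E0 (n+1)) (E1 (n+1))) p).det = 1
    rw [fderiv_comp p (ihd _) (hsv p)]
    show LinearMap.det _ = 1
    rw [ContinuousLinearMap.toLinearMap_comp, LinearMap.det_comp]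
    have := ihdet (svStep τ (E0 (n+1)) (E1 (n+1)) p)
    have hdet2 := svStep_det τ _ _ hs0 hs1 p
    simp only [ContinuousLinearMap.det] at this hdet2
    rw [this, hdet2, mul_one]
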